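/- For every Motzkin path p of length n, ar(p) ≤ ⌊n²/4⌋; moreover this bound is attained: if n = 2k then ar(U^k D^k) = ⌊n²/4⌋, and if n = 2k+1 then ar(U^k H D^k) = ⌊n²/4⌋. -/

import Mathlib

/-- The three kinds of steps of a Motzkin path. -/
inductive Step : Type
  | U : Step
  | D : Step
  | H : Step
deriving DecidableEq
instance : Fintype Step :=
  ⟨{Step.U, Step.D, Step.H}, fun x => by cases x <;> simp⟩
/-- Number of indices `i` with `i < m` (i.e. in the prefix of length `m`,
with 0-based indexing) at which the word `p` has the letter `s`. -/
def countIn {n : ℕ} (p : Fin n → Step) (s : Step) (m : ℕ) : ℕ :=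
  (Finset.univ.filter (fun i : Fin n => (i : ℕ) < m ∧ p i = s)).card
/-- A word `p` of length `n` over `{U, D, H}` is a Motzkin path if every
prefix contains at least as many `U`'s as `D`'s and the whole word contains
equally many `U`'s and `D`'s. -/
def IsMotzkin {n : ℕ} (p : Fin n → Step) : Prop :=
  (∀ m ≤ n, countIn p Step.D m ≤ countIn p Step.U m) ∧
  countIn p Step.U n = countIn p Step.D n
/-- The height `h_i` of step `i`: the number of `j ≤ i` with `p_j = U` minus
the number of `j ≤ i` with `p_j = D`, increased by `1` when `p_i = D`. -/
def heightAt {n : ℕ} (p : Fin n → Step) (i : Fin n) : ℕ :=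
  ((Finset.univ.filter (fun j : Fin n => j ≤ i ∧ p j = Step.U)).card
    - (Finset.univ.filter (fun j : Fin n => j ≤ i ∧ p j = Step.D)).card)
    + (if p i = Step.D then 1 else 0)
/-- The area below a Motzkin path:
`ar(p) = ∑_{i : p_i = H} h_i + ∑_{i : p_i ∈ {U,D}} (h_i - 1/2)`. -/
def area {n : ℕ} (p : Fin n → Step) : ℚ :=
  (∑ i ∈ Finset.univ.filter (fun i : Fin n => p i = Step.H),
    (heightAt p i : ℚ))
  + ∑ i ∈ Finset.univ.filter (fun i : Fin n => p i = Step.U ∨ p i = Step.D),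
      ((heightAt p i : ℚ) - 1/2)
/-- The Motzkin path `U^k D^k`. -/
def ukdk (k : ℕ) : Fin (2 * k) → Step := fun i =>
  if (i : ℕ) < k then Step.U else Step.D

/-- The Motzkin path `U^k H D^k`. -/
def ukhdk (k : ℕ) : Fin (2 * k + 1) → Step := fun i =>
  if (i : ℕ) < k then Step.U else if (i : ℕ) = k then Step.H else Step.D
open Finset

namespace MotzkinAux

def wext {n : ℕ} (p : Fin n → Step) : ℕ → Step :=
  fun j => if h : j < n then p ⟨j, h⟩ else Step.H

def cnt (w : ℕ → Step) (s : Step) (m : ℕ) : ℕ :=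
  ((Finset.range m).filter (fun j => w j = s)).card

lemma wext_apply {n : ℕ} (p : Fin n → Step) (i : Fin n) : wext p (i : ℕ) = p i := by
  simp [wext]

lemma countIn_eq {n : ℕ} (p : Fin n → Step) (s : Step) {m : ℕ} (hm : m ≤ n) :
    countIn p s m = cnt (wext p) s m := by
  unfold countIn cnt
  refine Finset.card_bij (fun i _ => (i : ℕ)) ?_ ?_ ?_
  · intro i hi
    simp only [mem_filter, mem_univ, true_and] at hi
    simp only [mem_filter, mem_range]
    exact ⟨hi.1, by rw [wext_apply]; exact hi.2⟩
  · intro a _ b _ h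
    exact Fin.ext h
  · intro j hj
    simp only [mem_filter, mem_range] at hj
    have hjn : j < n := lt_of_lt_of_le hj.1 hm
    refine ⟨⟨j, hjn⟩, ?_, rfl⟩
    simp only [mem_filter, mem_univ, true_and]
    exact ⟨hj.1, by rw [← wext_apply p ⟨j, hjn⟩]; exact hj.2⟩

lemma cnt_succ (w : ℕ → Step) (s : Step) (m : ℕ) :
    cnt w s (m + 1) = cnt w s m + if w m = s then 1 else 0 := by
  unfold cnt
  rw [Finset.range_add_one, Finset.filter_insert]
  by_cases h : w m = s
  · rw [if_pos h, if_pos h, Finset.card_insert_of_notMem (fun hc => by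
      have := Finset.mem_of_mem_filter m hc
      exact absurd this (Finset.notMem_range_self))]
  · rw [if_neg h, if_neg h, add_zero]

lemma cnt_le (w : ℕ → Step) (s : Step) (m : ℕ) : cnt w s m ≤ m := by
  simpa [cnt] using Finset.card_filter_le (Finset.range m) (fun j => w j = s)

lemma cnt_mono (w : ℕ → Step) (s : Step) {a b : ℕ} (h : a ≤ b) :
    cnt w s a ≤ cnt w s b :=
  Finset.card_le_card (Finset.filter_subset_filter _ (Finset.range_subset_range.2 h))

lemma cnt_sub_le (w : ℕ → Step) (s : Step) {a b : ℕ} (h : a ≤ b) :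
    cnt w s b ≤ cnt w s a + (b - a) := by
  induction b, h using Nat.le_induction with
  | base => simp
  | succ b hb ih =>
    rw [cnt_succ]
    have : b + 1 - a = (b - a) + 1 := by omega
    rw [this]
    split <;> omega

lemma sum_min (n : ℕ) : ∑ j ∈ Finset.range n, min j (n - j) = n ^ 2 / 4 := by
  induction n using Nat.twoStepInduction with
  | zero => simp
  | one => simp
  | more n ih _ =>
    rw [Finset.sum_range_succ', Finset.sum_range_succ]
    have h1 : ∀ j ∈ Finset.range n, min (j + 1) (n + 2 - (j + 1)) = min j (n - j) + 1 := by
      intro j hj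
      have := Finset.mem_range.1 hj
      omega
    rw [Finset.sum_congr rfl h1, Finset.sum_add_distrib, ih]
    have h2 : (n + 2) ^ 2 = n ^ 2 + 4 * n + 4 := by ring
    simp only [Finset.sum_const, Finset.card_range, smul_eq_mul, mul_one]
    omega

def hgt (w : ℕ → Step) (j : ℕ) : ℕ :=
  (cnt w Step.U (j + 1) - cnt w Step.D (j + 1)) + (if w j = Step.D then 1 else 0)

lemma heightAt_eq {n : ℕ} (p : Fin n → Step) (i : Fin n) :
    heightAt p i = hgt (wext p) (i : ℕ) := by
  have hs : ∀ s : Step, (Finset.univ.filter (fun j : Fin n => j ≤ i ∧ p j = s)).card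
      = cnt (wext p) s ((i : ℕ) + 1) := by
    intro s
    rw [← countIn_eq p s i.isLt]
    unfold countIn
    congr 1
    ext j
    simp only [Finset.mem_filter, Finset.mem_univ, true_and, Fin.le_def, Nat.lt_succ_iff]
  unfold heightAt hgt
  rw [hs, hs, wext_apply]

lemma area_eq {n : ℕ} (p : Fin n → Step)
    (hm : ∀ m ≤ n, cnt (wext p) Step.D m ≤ cnt (wext p) Step.U m) :
    area p = (∑ j ∈ Finset.range n,
        ((cnt (wext p) Step.U j : ℚ) - (cnt (wext p) Step.D j : ℚ)))
      + ((cnt (wext p) Step.U n : ℚ) - (cnt (wext p) Step.D n : ℚ)) / 2 := by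
  set w := wext p with hw
  have step1 : area p = ∑ j ∈ Finset.range n,
      ((if w j = Step.H then (hgt w j : ℚ) else 0)
        + (if w j = Step.U ∨ w j = Step.D then (hgt w j : ℚ) - 1/2 else 0)) := by
    unfold area
    rw [Finset.sum_filter, Finset.sum_filter, ← Finset.sum_add_distrib]
    rw [← Fin.sum_univ_eq_sum_range]
    apply Finset.sum_congr rfl
    intro i _
    rw [heightAt_eq, ← wext_apply p i, ← hw]
  rw [step1]
  have step2 : ∀ j < n,
      ((if w j = Step.H then (hgt w j : ℚ) else 0)
        + (if w j = Step.U ∨ w j = Step.D then (hgt w j : ℚ) - 1/2 else 0))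
      = ((cnt w Step.U j : ℚ) - (cnt w Step.D j : ℚ))
        + ((if w j = Step.U then (1:ℚ) else 0) / 2 - (if w j = Step.D then (1:ℚ) else 0) / 2) := by
    intro j hj
    have h1 : cnt w Step.D j ≤ cnt w Step.U j := hm j hj.le
    have h2 : cnt w Step.D (j+1) ≤ cnt w Step.U (j+1) := hm (j+1) hj
    have hu := cnt_succ w Step.U j
    have hd := cnt_succ w Step.D j
    have hcast : (hgt w j : ℚ) = (cnt w Step.U (j+1) : ℚ) - (cnt w Step.D (j+1) : ℚ)
        + (if w j = Step.D then (1:ℚ) else 0) := by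
      unfold hgt
      push_cast [Nat.cast_sub h2]
      split <;> simp
    cases hwj : w j with
    | U =>
      simp only [hwj] at hcast hu hd
      simp only [hwj, hcast, hu, hd]
      simp
      all_goals push_cast
      all_goals ring
    | D =>
      simp only [hwj] at hcast hu hd
      simp only [hwj, hcast, hu, hd]
      simp
      all_goals push_cast
      all_goals ring
    | H =>
      simp only [hwj] at hcast hu hd
      simp only [hwj, hcast, hu, hd]
      simp
      all_goals push_cast
      all_goals ring
  rw [Finset.sum_congr rfl (fun j hj => step2 j (Finset.mem_range.1 hj))]
  rw [Finset.sum_add_distrib, Finset.sum_sub_distrib, Finset.sum_sub_distrib]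
  have hsum : ∀ s : Step, ∑ j ∈ Finset.range n, (if w j = s then (1:ℚ) else 0) / 2
      = (cnt w s n : ℚ) / 2 := by
    intro s
    rw [← Finset.sum_div]
    congr 1
    rw [Finset.sum_boole]
    rfl
  rw [hsum, hsum]
  ring

lemma area_le {n : ℕ} (p : Fin n → Step) (h : IsMotzkin p) :
    area p ≤ ((n ^ 2 / 4 : ℕ) : ℚ) := by
  have hm : ∀ m ≤ n, cnt (wext p) Step.D m ≤ cnt (wext p) Step.U m := by
    intro m hmn
    have := h.1 m hmn
    rwa [countIn_eq p Step.D hmn, countIn_eq p Step.U hmn] at this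
  have heq : cnt (wext p) Step.U n = cnt (wext p) Step.D n := by
    have := h.2
    rwa [countIn_eq p Step.U le_rfl, countIn_eq p Step.D le_rfl] at this
  rw [area_eq p hm, heq, sub_self, zero_div, add_zero]
  calc ∑ j ∈ Finset.range n, ((cnt (wext p) Step.U j : ℚ) - (cnt (wext p) Step.D j : ℚ))
      ≤ ∑ j ∈ Finset.range n, ((min j (n - j) : ℕ) : ℚ) := by
        apply Finset.sum_le_sum
        intro j hj
        have hj' := Finset.mem_range.1 hj
        have b1 : cnt (wext p) Step.U j ≤ j := cnt_le _ _ j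
        have b2 : cnt (wext p) Step.U j ≤ cnt (wext p) Step.D j + (n - j) := by
          have h3 : cnt (wext p) Step.U j ≤ cnt (wext p) Step.U n := cnt_mono _ _ hj'.le
          have h4 : cnt (wext p) Step.D n ≤ cnt (wext p) Step.D j + (n - j) :=
            cnt_sub_le _ _ hj'.le
          omega
        have hle : cnt (wext p) Step.U j ≤ cnt (wext p) Step.D j + min j (n - j) := by omega
        have := (Nat.cast_le (α := ℚ)).2 hle
        push_cast at this ⊢
        linarith
    _ = ((n ^ 2 / 4 : ℕ) : ℚ) := by rw [← Nat.cast_sum, sum_min]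

lemma ukdk_U (k j : ℕ) : wext (ukdk k) j = Step.U ↔ j < k := by
  unfold wext ukdk
  split_ifs with h1 h2 <;> simp_all <;> omega

lemma ukdk_D (k j : ℕ) : wext (ukdk k) j = Step.D ↔ k ≤ j ∧ j < 2 * k := by
  unfold wext ukdk
  split_ifs with h1 h2 <;> simp_all <;> omega

lemma cnt_ukdk_U (k : ℕ) {m : ℕ} (_hm : m ≤ 2 * k) :
    cnt (wext (ukdk k)) Step.U m = min m k := by
  unfold cnt
  rw [show (Finset.range m).filter (fun j => wext (ukdk k) j = Step.U)
      = Finset.range (min m k) from by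
    ext j
    simp only [Finset.mem_filter, Finset.mem_range, ukdk_U]
    omega]
  exact Finset.card_range _

lemma cnt_ukdk_D (k : ℕ) {m : ℕ} (hm : m ≤ 2 * k) :
    cnt (wext (ukdk k)) Step.D m = m - k := by
  unfold cnt
  rw [show (Finset.range m).filter (fun j => wext (ukdk k) j = Step.D)
      = Finset.Ico k m from by
    ext j
    simp only [Finset.mem_filter, Finset.mem_range, ukdk_D, Finset.mem_Ico]
    omega]
  exact Nat.card_Ico k m

lemma area_ukdk (k : ℕ) : area (ukdk k) = (((2 * k) ^ 2 / 4 : ℕ) : ℚ) := by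
  have hm : ∀ m ≤ 2 * k, cnt (wext (ukdk k)) Step.D m ≤ cnt (wext (ukdk k)) Step.U m := by
    intro m h
    rw [cnt_ukdk_D k h, cnt_ukdk_U k h]
    omega
  rw [area_eq (ukdk k) hm, cnt_ukdk_U k le_rfl, cnt_ukdk_D k le_rfl]
  have hterm : ∀ j ∈ Finset.range (2 * k),
      ((cnt (wext (ukdk k)) Step.U j : ℚ) - (cnt (wext (ukdk k)) Step.D j : ℚ))
        = ((min j (2 * k - j) : ℕ) : ℚ) := by
    intro j hj
    have hj' := Finset.mem_range.1 hj
    rw [cnt_ukdk_U k hj'.le, cnt_ukdk_D k hj'.le]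
    rw [show min j k = (j - k) + min j (2 * k - j) from by omega]
    push_cast
    ring
  rw [Finset.sum_congr rfl hterm, ← Nat.cast_sum, sum_min]
  rw [show min (2 * k) k = k from by omega, show 2 * k - k = k from by omega]
  simp

lemma ukhdk_U (k j : ℕ) : wext (ukhdk k) j = Step.U ↔ j < k := by
  unfold wext ukhdk
  split_ifs with h1 h2 h3 <;> simp_all <;> omega

lemma ukhdk_D (k j : ℕ) : wext (ukhdk k) j = Step.D ↔ k + 1 ≤ j ∧ j < 2 * k + 1 := by
  unfold wext ukhdk
  split_ifs with h1 h2 h3 <;> simp_all <;> omega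

lemma cnt_ukhdk_U (k : ℕ) {m : ℕ} (_hm : m ≤ 2 * k + 1) :
    cnt (wext (ukhdk k)) Step.U m = min m k := by
  unfold cnt
  rw [show (Finset.range m).filter (fun j => wext (ukhdk k) j = Step.U)
      = Finset.range (min m k) from by
    ext j
    simp only [Finset.mem_filter, Finset.mem_range, ukhdk_U]
    omega]
  exact Finset.card_range _

lemma cnt_ukhdk_D (k : ℕ) {m : ℕ} (hm : m ≤ 2 * k + 1) :
    cnt (wext (ukhdk k)) Step.D m = m - (k + 1) := by
  unfold cnt
  rw [show (Finset.range m).filter (fun j => wext (ukhdk k) j = Step.D)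
      = Finset.Ico (k + 1) m from by
    ext j
    simp only [Finset.mem_filter, Finset.mem_range, ukhdk_D, Finset.mem_Ico]
    omega]
  exact Nat.card_Ico (k + 1) m

lemma area_ukhdk (k : ℕ) : area (ukhdk k) = (((2 * k + 1) ^ 2 / 4 : ℕ) : ℚ) := by
  have hm : ∀ m ≤ 2 * k + 1,
      cnt (wext (ukhdk k)) Step.D m ≤ cnt (wext (ukhdk k)) Step.U m := by
    intro m h
    rw [cnt_ukhdk_D k h, cnt_ukhdk_U k h]
    omega
  rw [area_eq (ukhdk k) hm, cnt_ukhdk_U k le_rfl, cnt_ukhdk_D k le_rfl]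
  have hterm : ∀ j ∈ Finset.range (2 * k + 1),
      ((cnt (wext (ukhdk k)) Step.U j : ℚ) - (cnt (wext (ukhdk k)) Step.D j : ℚ))
        = ((min j (2 * k + 1 - j) : ℕ) : ℚ) := by
    intro j hj
    have hj' := Finset.mem_range.1 hj
    rw [cnt_ukhdk_U k hj'.le, cnt_ukhdk_D k hj'.le]
    rw [show min j k = (j - (k + 1)) + min j (2 * k + 1 - j) from by omega]
    push_cast
    ring
  rw [Finset.sum_congr rfl hterm, ← Nat.cast_sum, sum_min]
  rw [show min (2 * k + 1) k = k from by omega, show 2 * k + 1 - (k + 1) = k from by omega]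
  simp

end MotzkinAux

/-- Every Motzkin path `p` of length `n` has area at most `⌊n²/4⌋`, and the
bound is attained: `ar(U^k D^k) = ⌊(2k)²/4⌋` and `ar(U^k H D^k) = ⌊(2k+1)²/4⌋`. -/
theorem area_le_and_attained :
    (∀ (n : ℕ) (p : Fin n → Step), IsMotzkin p →
      area p ≤ ((n ^ 2 / 4 : ℕ) : ℚ)) ∧
    (∀ k : ℕ, area (ukdk k) = (((2 * k) ^ 2 / 4 : ℕ) : ℚ)) ∧
    (∀ k : ℕ, area (ukhdk k) = (((2 * k + 1) ^ 2 / 4 : ℕ) : ℚ)) := by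
  exact ⟨fun n p h => MotzkinAux.area_le p h, MotzkinAux.area_ukdk, MotzkinAux.area_ukhdk⟩
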